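/- There do not exist 2×2 complex positive semidefinite matrices X and Y such that X·Y + Y·X = !![0,1;1,0]. (Hence the swap operator cannot be written as an anticommutator of positive operators sector by sector.) -/

import Mathlib

open Matrix ComplexOrder

lemma psd_facts {X : Matrix (Fin 2) (Fin 2) ℂ} (hX : X.PosSemidef) :
    0 ≤ (X 0 0).re ∧ 0 ≤ (X 1 1).re ∧ (X 0 0).im = 0 ∧ (X 1 1).im = 0 ∧
    X 1 0 = starRingEnd ℂ (X 0 1) ∧
    Complex.normSq (X 0 1) ≤ (X 0 0).re * (X 1 1).re := by
  obtain ⟨B, hB⟩ : ∃ B : Matrix (Fin 2) (Fin 2) ℂ, X = Bᴴ * B := by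
    open scoped MatrixOrder in
    exact CStarAlgebra.nonneg_iff_eq_star_mul_self.mp hX.nonneg
  subst hB
  simp only [Matrix.mul_apply, Matrix.conjTranspose_apply, Fin.sum_univ_two,
    Complex.normSq_apply, Complex.add_re, Complex.add_im, Complex.mul_re, Complex.mul_im,
    Complex.star_def, Complex.conj_re, Complex.conj_im, Complex.ext_iff, RingHom.id_apply,
    Complex.conj_conj, neg_neg, neg_mul, mul_neg]
  set u1 := (B 0 0).re; set u2 := (B 0 0).im
  set v1 := (B 1 0).re; set v2 := (B 1 0).im
  set w1 := (B 0 1).re; set w2 := (B 0 1).im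
  set z1 := (B 1 1).re; set z2 := (B 1 1).im
  refine ⟨by nlinarith [sq_nonneg u1, sq_nonneg u2, sq_nonneg v1, sq_nonneg v2],
    by nlinarith [sq_nonneg w1, sq_nonneg w2, sq_nonneg z1, sq_nonneg z2],
    by ring, by ring, ⟨by ring, by ring⟩, ?_⟩
  nlinarith [sq_nonneg (u1*z1 + u2*z2 - v1*w1 - v2*w2), sq_nonneg (u1*z2 - u2*z1 - v1*w2 + v2*w1),
    sq_nonneg (u1*z1 - u2*z2 - v1*w1 + v2*w2), sq_nonneg (u1*z2 + u2*z1 - v1*w2 - v2*w1)]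

set_option maxHeartbeats 1000000 in
/-- The matrix `!![0,1;1,0]` cannot be written as the anticommutator of two
positive semidefinite `2×2` matrices. -/
theorem no_anticommutator_representation_of_offdiag :
    ¬ ∃ X Y : Matrix (Fin 2) (Fin 2) ℂ,
      X.PosSemidef ∧ Y.PosSemidef ∧
      X * Y + Y * X = !![0, 1; 1, 0] := by
  rintro ⟨X, Y, hX, hY, hEq⟩
  obtain ⟨ha, hd, hai, hdi, hherm, hdet⟩ := psd_facts hX
  obtain ⟨hp, hq, hpi, hqi, hhermY, hdetY⟩ := psd_facts hY
  have h00 := congrFun (congrFun hEq 0) 0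
  have h11 := congrFun (congrFun hEq 1) 1
  have h01 := congrFun (congrFun hEq 0) 1
  simp only [Matrix.add_apply, Matrix.mul_apply, Fin.sum_univ_two, Matrix.cons_val',
    Matrix.cons_val_zero, Matrix.cons_val_one, Matrix.head_cons, Matrix.empty_val',
    Matrix.cons_val_fin_one, Matrix.head_fin_const] at h00 h11 h01
  simp only [hherm, hhermY] at h00 h11 h01
  have e1 := congrArg Complex.re h00
  have e2 := congrArg Complex.re h11
  have e3 := congrArg Complex.re h01
  have e4 := congrArg Complex.im h01
  simp only [Complex.add_re, Complex.add_im, Complex.mul_re, Complex.mul_im,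
    Complex.conj_re, Complex.conj_im, Complex.zero_re, Complex.one_re, Complex.zero_im,
    Complex.one_im, hai, hdi, hpi, hqi, Matrix.of_apply, Matrix.cons_val_zero, Matrix.cons_val_one, Matrix.head_cons, Matrix.head_fin_const, Matrix.cons_val_fin_one] at e1 e2 e3 e4
  rw [Complex.normSq_apply] at hdet hdetY
  set a := (X 0 0).re; set d := (X 1 1).re
  set p := (Y 0 0).re; set q := (Y 1 1).re
  set b1 := (X 0 1).re; set b2 := (X 0 1).im
  set c1 := (Y 0 1).re; set c2 := (Y 0 1).im
  have hs1 : a*p + (b1*c1 + b2*c2) = 0 := by linarith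
  have hs2 : d*q + (b1*c1 + b2*c2) = 0 := by linarith
  have hE3 : (a+d)*c1 + (p+q)*b1 = 1 := by linarith
  have hE4 : (a+d)*c2 + (p+q)*b2 = 0 := by linarith
  have h3 : ((a+d)*c1 + (p+q)*b1)^2 = 1 := by rw [hE3]; norm_num
  have h4 : ((a+d)*c2 + (p+q)*b2)^2 = 0 := by rw [hE4]; ring
  have hdet' : (0:ℝ) ≤ a*d - (b1^2 + b2^2) := by nlinarith
  have hdetY' : (0:ℝ) ≤ p*q - (c1^2 + c2^2) := by nlinarith
  have key : ((a+d)*c1+(p+q)*b1)^2 + ((a+d)*c2+(p+q)*b2)^2 =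
      (a+d)^2*(c1^2+c2^2) + (p+q)^2*(b1^2+b2^2) - (a+d)*(p+q)*(a*p+d*q) := by
    linear_combination ((a+d)*(p+q))*(hs1+hs2)
  nlinarith [key, h3, h4, mul_nonneg (sq_nonneg (a+d)) hdetY',
    mul_nonneg (sq_nonneg (p+q)) hdet', sq_nonneg (a*p - d*q)]
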